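/- Fix M ≥ 1 and take Ω = {0,1} with uniform prior, u_s(q) = 1/M + |q(1) − 1/2|·(2(M−1)/M), f(q) = q(1), c = 1/2. Then: (a) u_s takes values in [1/M, 1], hence satisfies the M-relaxed Jensen inequality; (b) the only signaling scheme satisfying the ex post constraint q(1) ≤ 1/2 for all support points (together with Bayes-plausibility forcing E[q(1)] = 1/2) is the point mass on the prior, yielding Sender utility 1/M; (c) full revelation satisfies the ex ante constraint E[q(1)] ≤ 1/2 and yields Sender utility 1. Hence the gap of M between ex ante and ex post constraints is achieved for m = 1 constraint. -/

import Mathlib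

open MeasureTheory

theorem stmt9 (M : ℝ) (hM : 1 ≤ M) :
    let u : ℝ → ℝ := fun x => 1 / M + |x - 1 / 2| * (2 * (M - 1) / M)
    (∀ x ∈ Set.Icc (0 : ℝ) 1, u x ∈ Set.Icc (1 / M) 1) ∧
    (∀ x ∈ Set.Icc (0 : ℝ) 1, ∀ y ∈ Set.Icc (0 : ℝ) 1, ∀ l : ℝ, 0 ≤ l → l ≤ 1 →
      l * u x + (1 - l) * u y ≤ M * u (l * x + (1 - l) * y)) ∧
    (∀ P : Measure ℝ, IsProbabilityMeasure P → (∀ᵐ x ∂P, x ∈ Set.Icc (0 : ℝ) 1) →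
      (∫ x, x ∂P) = 1 / 2 → (∀ᵐ x ∂P, x ≤ 1 / 2) →
      P = Measure.dirac (1 / 2) ∧ (∫ x, u x ∂P) = 1 / M) ∧
    (let P₀ : Measure ℝ :=
        (1 / 2 : ENNReal) • Measure.dirac (0 : ℝ) + (1 / 2 : ENNReal) • Measure.dirac (1 : ℝ);
      IsProbabilityMeasure P₀ ∧ (∫ x, x ∂P₀) = 1 / 2 ∧ (∫ x, u x ∂P₀) = 1) := by
  intro u
  have hM0 : (0:ℝ) < M := by linarith
  have hcoef : (0:ℝ) ≤ 2 * (M - 1) / M := div_nonneg (by linarith) hM0.le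
  have hmem : ∀ x ∈ Set.Icc (0 : ℝ) 1, u x ∈ Set.Icc (1 / M) 1 := by
    intro x hx
    obtain ⟨hx0, hx1⟩ := hx
    have habs : |x - 1/2| ≤ 1/2 := abs_le.2 ⟨by linarith, by linarith⟩
    have h1 : |x - 1/2| * (2 * (M-1)/M) ≤ (1/2) * (2 * (M-1)/M) :=
      mul_le_mul_of_nonneg_right habs hcoef
    have h2 : (0:ℝ) ≤ |x - 1/2| * (2 * (M-1)/M) := mul_nonneg (abs_nonneg _) hcoef
    have h3 : (1:ℝ)/M + (1/2) * (2 * (M-1)/M) = 1 := by field_simp; ring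
    constructor
    · simp only [u]; linarith
    · simp only [u]; linarith
  refine ⟨hmem, ?_, ?_, ?_⟩
  · intro x hx y hy l hl0 hl1
    have hcomb : l * x + (1 - l) * y ∈ Set.Icc (0:ℝ) 1 := by
      constructor
      · have := hx.1; have := hy.1
        nlinarith [hx.1, hy.1]
      · nlinarith [hx.2, hy.2]
    have hux := hmem x hx
    have huy := hmem y hy
    have huc := hmem _ hcomb
    have h1 : l * u x + (1 - l) * u y ≤ 1 := by
      nlinarith [hux.2, huy.2, hux.1, huy.1, one_div_pos.2 hM0]
    have h2 : (1:ℝ) ≤ M * u (l * x + (1 - l) * y) := by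
      have := huc.1
      calc (1:ℝ) = M * (1/M) := by field_simp
        _ ≤ M * u (l * x + (1 - l) * y) := by
            exact mul_le_mul_of_nonneg_left this hM0.le
    linarith
  · intro P hP hPmem hPint hPle
    have hint : Integrable (fun x : ℝ => x) P := by
      refine Integrable.mono' (integrable_const 1) measurable_id.aestronglyMeasurable ?_
      filter_upwards [hPmem] with x hx
      rw [Real.norm_eq_abs]
      exact abs_le.2 ⟨by linarith [hx.1], hx.2⟩
    have hint2 : Integrable (fun x : ℝ => 1/2 - x) P := (integrable_const (1/2)).sub hint
    have hzero : (∫ x, (1/2 - x) ∂P) = 0 := by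
      rw [integral_sub (integrable_const _) hint, integral_const]
      simp [hPint]
    have hae : ∀ᵐ x ∂P, (1/2 - x) = 0 := by
      have hnn : 0 ≤ᵐ[P] fun x : ℝ => 1/2 - x := by
        filter_upwards [hPle] with x hx
        show (0:ℝ) ≤ 1/2 - x
        linarith
      exact (integral_eq_zero_iff_of_nonneg_ae hnn hint2).mp hzero
    have hae2 : ∀ᵐ x ∂P, x = 1/2 := by
      filter_upwards [hae] with x hx; linarith
    have hPeq : P = Measure.dirac (1/2) := by
      have hne : P {x : ℝ | x ≠ 1/2} = 0 := by
        have := ae_iff.mp hae2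
        simpa using this
      ext s hs
      rw [Measure.dirac_apply' _ hs]
      by_cases hmem' : (1/2 : ℝ) ∈ s
      · have : P sᶜ = 0 := by
          refine measure_mono_null ?_ hne
          intro x hx hx2
          exact hx (hx2 ▸ hmem')
        have hs1 := prob_compl_eq_zero_iff hs |>.mp this
        have hmem'' : (2:ℝ)⁻¹ ∈ s := by rw [show ((2:ℝ)⁻¹) = 1/2 by norm_num]; exact hmem'
        simp [hs1, Set.indicator_of_mem hmem'']
      · have : P s = 0 := by
          refine measure_mono_null ?_ hne
          intro x hx hx2
          exact hmem' (hx2 ▸ hx)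
        have hmem'' : (2:ℝ)⁻¹ ∉ s := by rw [show ((2:ℝ)⁻¹) = 1/2 by norm_num]; exact hmem'
        simp [this, Set.indicator_of_notMem hmem'']
    refine ⟨hPeq, ?_⟩
    rw [hPeq, integral_dirac]
    simp [u]
  · intro P₀
    have hucont : Continuous u := by
      have : Continuous fun x : ℝ => |x - 1/2| := (continuous_id.sub continuous_const).abs
      exact continuous_const.add (this.mul continuous_const)
    have hiu : ∀ a : ℝ, Integrable u (Measure.dirac a) := fun a =>
      ⟨hucont.aestronglyMeasurable, by
        simp [HasFiniteIntegral, lintegral_dirac]⟩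
    have hix : ∀ a : ℝ, Integrable (fun x : ℝ => x) (Measure.dirac a) := fun a =>
      ⟨continuous_id.aestronglyMeasurable, by
        simp [HasFiniteIntegral, lintegral_dirac]⟩
    have hP01 : IsProbabilityMeasure P₀ := by
      constructor
      simp [P₀, Measure.add_apply]
      rw [ENNReal.inv_two_add_inv_two]
    have hid : (∫ x, x ∂P₀) = 1/2 := by
      rw [integral_add_measure, integral_smul_measure, integral_smul_measure,
        integral_dirac, integral_dirac]
      · norm_num
      · exact (hix 0).smul_measure (by norm_num)
      · exact (hix 1).smul_measure (by norm_num)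
    have hu : (∫ x, u x ∂P₀) = 1 := by
      rw [integral_add_measure, integral_smul_measure, integral_smul_measure,
        integral_dirac, integral_dirac]
      · have h0 : u 0 = 1 := by
          simp only [u]
          rw [show |(0:ℝ) - 1/2| = 1/2 by rw [abs_of_nonpos (by norm_num)]; norm_num]
          field_simp; ring
        have h1 : u 1 = 1 := by
          simp only [u]
          rw [show |(1:ℝ) - 1/2| = 1/2 by rw [abs_of_nonneg (by norm_num)]; norm_num]
          field_simp; ring
        rw [h0, h1]
        norm_num
      · exact (hiu 0).smul_measure (by norm_num)
      · exact (hiu 1).smul_measure (by norm_num)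
    exact ⟨hP01, hid, hu⟩
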